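/- If for every sender j with positive out-degree and every out-neighbor i of j the equality N^out·|N^out_j| = N^in·|N^in_i| holds (Condition 3), then B_j = Σ_{i∈N^out_j} (1/(N^out|N^out_j|) − 1/(N^in|N^in_i|))·Y_i = 0 identically, and therefore the conservative variances of the outward and inward Horvitz–Thompson estimators are equal: V^c(τ̂^out) = V^c(τ̂^in). -/

import Mathlib

open Finset

/-- Out-neighbors of `j` in the directed graph `A` (`A j i` means an edge `j → i`). -/
def Nout {V : Type*} [Fintype V] (A : V → V → Prop) [DecidableRel A] (j : V) : Finset V :=
  Finset.univ.filter (fun i => A j i)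

/-- In-neighbors of `i`. -/
def Nin {V : Type*} [Fintype V] (A : V → V → Prop) [DecidableRel A] (i : V) : Finset V :=
  Finset.univ.filter (fun j => A j i)

/-- Units with at least one out-neighbor. -/
def senders {V : Type*} [Fintype V] (A : V → V → Prop) [DecidableRel A] : Finset V :=
  Finset.univ.filter (fun j => (Nout A j).Nonempty)

/-- Units with at least one in-neighbor. -/
def receivers {V : Type*} [Fintype V] (A : V → V → Prop) [DecidableRel A] : Finset V :=
  Finset.univ.filter (fun i => (Nin A i).Nonempty)

/-- Expectation on a finite probability space. -/
noncomputable def pexp {Ω : Type*} [Fintype Ω] (p : Ω → ℝ) (f : Ω → ℝ) : ℝ :=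
  ∑ ω, p ω * f ω

/-- Average outcome among the out-neighbors of `j`: `Ȳ^out_j`. -/
noncomputable def Ybarout {V Ω : Type*} [Fintype V] (A : V → V → Prop) [DecidableRel A]
    (Y : V → Ω → ℝ) (j : V) (ω : Ω) : ℝ :=
  (((Nout A j).card : ℝ))⁻¹ * ∑ i ∈ Nout A j, Y i ω

/-- In-degree–weighted sum of outcomes of `j`'s out-neighbors:
`Σ_{i∈N^out_j} (1/|N^in_i|)·Y_i`. -/
noncomputable def Ytilout {V Ω : Type*} [Fintype V] (A : V → V → Prop) [DecidableRel A]
    (Y : V → Ω → ℝ) (j : V) (ω : Ω) : ℝ :=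
  ∑ i ∈ Nout A j, (((Nin A i).card : ℝ))⁻¹ * Y i ω

/-- `B_j = Σ_{i∈N^out_j} (1/(N^out·|N^out_j|) − 1/(N^in·|N^in_i|))·Y_i`. -/
noncomputable def Bq {V Ω : Type*} [Fintype V] (A : V → V → Prop) [DecidableRel A]
    (Y : V → Ω → ℝ) (j : V) (ω : Ω) : ℝ :=
  ∑ i ∈ Nout A j,
    ((((senders A).card : ℝ) * ((Nout A j).card : ℝ))⁻¹
      - (((receivers A).card : ℝ) * ((Nin A i).card : ℝ))⁻¹) * Y i ω

/-- `D_j = Σ_{i∈N^out_j} (1/(N^out·|N^out_j|) + 1/(N^in·|N^in_i|))·Y_i`. -/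
noncomputable def Dq {V Ω : Type*} [Fintype V] (A : V → V → Prop) [DecidableRel A]
    (Y : V → Ω → ℝ) (j : V) (ω : Ω) : ℝ :=
  ∑ i ∈ Nout A j,
    ((((senders A).card : ℝ) * ((Nout A j).card : ℝ))⁻¹
      + (((receivers A).card : ℝ) * ((Nin A i).card : ℝ))⁻¹) * Y i ω

/-- Conservative variance of the outward Horvitz–Thompson estimator:
`V^c(τ̂^out) = Σ_k Σ_{j∈N^out_k} |N^out_k|·E[W_j²·1{Z_j=1}·((1/N^out)Ȳ^out_j)²
  + W_j²·1{Z_j=0}·((1/N^out)Ȳ^out_j)²]`. -/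
noncomputable def VcOut {V K Ω : Type*} [Fintype V] [Fintype K] [DecidableEq K] [Fintype Ω]
    (p : Ω → ℝ) (A : V → V → Prop) [DecidableRel A] (cl : V → K)
    (W : V → Ω → ℝ) (Z : V → Ω → Bool) (Y : V → Ω → ℝ) : ℝ :=
  ∑ k : K, ∑ j ∈ (senders A).filter (fun j' => cl j' = k),
    ((((senders A).filter (fun j' => cl j' = k)).card : ℝ)) *
      pexp p (fun ω =>
        (W j ω) ^ 2 * (if Z j ω then 1 else 0) *
            ((((senders A).card : ℝ))⁻¹ * Ybarout A Y j ω) ^ 2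
          + (W j ω) ^ 2 * (if Z j ω then 0 else 1) *
            ((((senders A).card : ℝ))⁻¹ * Ybarout A Y j ω) ^ 2)

/-- Conservative variance of the inward Horvitz–Thompson estimator, defined analogously
with `(1/N^in)·Σ_{i∈N^out_j}(1/|N^in_i|)·Y_i` in place of `(1/N^out)·Ȳ^out_j`. -/
noncomputable def VcIn {V K Ω : Type*} [Fintype V] [Fintype K] [DecidableEq K] [Fintype Ω]
    (p : Ω → ℝ) (A : V → V → Prop) [DecidableRel A] (cl : V → K)
    (W : V → Ω → ℝ) (Z : V → Ω → Bool) (Y : V → Ω → ℝ) : ℝ :=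
  ∑ k : K, ∑ j ∈ (senders A).filter (fun j' => cl j' = k),
    ((((senders A).filter (fun j' => cl j' = k)).card : ℝ)) *
      pexp p (fun ω =>
        (W j ω) ^ 2 * (if Z j ω then 1 else 0) *
            ((((receivers A).card : ℝ))⁻¹ * Ytilout A Y j ω) ^ 2
          + (W j ω) ^ 2 * (if Z j ω then 0 else 1) *
            ((((receivers A).card : ℝ))⁻¹ * Ytilout A Y j ω) ^ 2)

/-- if `N^out·|N^out_j| = N^in·|N^in_i|` for every sender `j` and every
out-neighbor `i` of `j` (Condition 3), then `B_j` vanishes identically and the conservative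
variances of the outward and inward Horvitz–Thompson estimators coincide. -/
theorem stmt16 {V K Ω : Type*} [Fintype V] [Fintype K] [DecidableEq K] [Fintype Ω]
    (p : Ω → ℝ) (A : V → V → Prop) [DecidableRel A] (cl : V → K)
    (W : V → Ω → ℝ) (Z : V → Ω → Bool) (Y : V → Ω → ℝ)
    (hNout : 0 < (senders A).card) (hNin : 0 < (receivers A).card)
    (hcond : ∀ j, (Nout A j).Nonempty → ∀ i ∈ Nout A j,
      ((senders A).card : ℝ) * ((Nout A j).card : ℝ)
        = ((receivers A).card : ℝ) * ((Nin A i).card : ℝ)) :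
    (∀ j ω, Bq A Y j ω = 0) ∧ VcOut p A cl W Z Y = VcIn p A cl W Z Y := by
  have hB : ∀ j ω, Bq A Y j ω = 0 := by
    intro j ω
    unfold Bq
    rcases (Nout A j).eq_empty_or_nonempty with h | h
    · simp [h]
    · apply Finset.sum_eq_zero
      intro i hi
      rw [hcond j h i hi]
      ring
  refine ⟨hB, ?_⟩
  unfold VcOut VcIn
  apply Finset.sum_congr rfl
  intro k _
  apply Finset.sum_congr rfl
  intro j hj
  have hjs : (Nout A j).Nonempty := by
    simp only [senders, Finset.mem_filter] at hj
    exact hj.1.2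
  congr 1
  unfold pexp
  apply Finset.sum_congr rfl
  intro ω _
  have key : (((senders A).card : ℝ))⁻¹ * Ybarout A Y j ω
      = (((receivers A).card : ℝ))⁻¹ * Ytilout A Y j ω := by
    unfold Ybarout Ytilout
    rw [Finset.mul_sum, Finset.mul_sum, Finset.mul_sum]
    apply Finset.sum_congr rfl
    intro i hi
    have h := hcond j hjs i hi
    have h1 : ((senders A).card : ℝ) ≠ 0 := by positivity
    have h2 : ((receivers A).card : ℝ) ≠ 0 := by positivity
    have h3 : ((Nout A j).card : ℝ) ≠ 0 := by
      have := hjs.card_pos; positivity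
    have h4 : ((Nin A i).card : ℝ) ≠ 0 := by
      intro h4
      rw [h4, mul_zero] at h
      exact (mul_ne_zero h1 h3) h
    field_simp
    rw [h]; ring
  simp only [key]
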